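/- Let m_o ≥ 1 and define polynomials in three real variables ξ = (ξ₁, ξ₂, ξ₃): φ₁(ξ) = He₂(ξ₂) − (1/2)(He₂(ξ₁) + He₂(ξ₃)); for k ≥ 1, φ_{2k}(ξ) = He_{2k+2}(ξ₂) and φ_{2k+1}(ξ) = (1/2)(He₂(ξ₁)·He_{2k}(ξ₂) + He_{2k}(ξ₂)·He₂(ξ₃)); ψ₁(ξ) = He₃(ξ₂) − (3/2)(He₂(ξ₁)·He₁(ξ₂) + He₁(ξ₂)·He₂(ξ₃)); for k ≥ 1, ψ_{2k}(ξ) = He_{2k+3}(ξ₂) and ψ_{2k+1}(ξ) = (1/2)(He₂(ξ₁)·He_{2k+1}(ξ₂) + He_{2k+1}(ξ₂)·He₂(ξ₃)). Let ω(ξ) = (2π)^{-3/2}·e^{-|ξ|²/2} be the standard Gaussian density on ℝ³. If r ∈ ℝ^{m_o} satisfies ∫_{ℝ³} φ_i(ξ)·ξ₂·(Σ_{j=1}^{m_o} r_j·ψ_j(ξ))·ω(ξ) dξ = 0 for every 1 ≤ i ≤ m_o, then r = 0. (This is the full-column-rank property of the matrix M₀ in the reduced moment system of the temperature jump problem.)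 -/

import Mathlib

open MeasureTheory Real

/-- The probabilist's Hermite polynomial evaluated at a real number. -/
noncomputable def He (n : ℕ) (x : ℝ) : ℝ := Polynomial.aeval x (Polynomial.hermite n)

/-- The even-parity basis polynomials `φ_i` (one-based index `i`):
`φ₁ = He₂(ξ₂) - (1/2)(He₂(ξ₁) + He₂(ξ₃))`, `φ_{2k} = He_{2k+2}(ξ₂)`,
`φ_{2k+1} = (1/2)(He₂(ξ₁)He_{2k}(ξ₂) + He_{2k}(ξ₂)He₂(ξ₃))` for `k ≥ 1`. -/
noncomputable def phi (i : ℕ) (ξ : Fin 3 → ℝ) : ℝ :=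
  if i = 1 then He 2 (ξ 1) - (1 / 2) * (He 2 (ξ 0) + He 2 (ξ 2))
  else if i % 2 = 0 then He (i + 2) (ξ 1)
  else (1 / 2) * (He 2 (ξ 0) * He (i - 1) (ξ 1) + He (i - 1) (ξ 1) * He 2 (ξ 2))

/-- The odd-parity basis polynomials `ψ_j` (one-based index `j`):
`ψ₁ = He₃(ξ₂) - (3/2)(He₂(ξ₁)He₁(ξ₂) + He₁(ξ₂)He₂(ξ₃))`, `ψ_{2k} = He_{2k+3}(ξ₂)`,
`ψ_{2k+1} = (1/2)(He₂(ξ₁)He_{2k+1}(ξ₂) + He_{2k+1}(ξ₂)He₂(ξ₃))` for `k ≥ 1`. -/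
noncomputable def psi (j : ℕ) (ξ : Fin 3 → ℝ) : ℝ :=
  if j = 1 then He 3 (ξ 1) - (3 / 2) * (He 2 (ξ 0) * He 1 (ξ 1) + He 1 (ξ 1) * He 2 (ξ 2))
  else if j % 2 = 0 then He (j + 3) (ξ 1)
  else (1 / 2) * (He 2 (ξ 0) * He j (ξ 1) + He j (ξ 1) * He 2 (ξ 2))

/-- The standard Gaussian density on `ℝ³`. -/
noncomputable def gauss3 (ξ : Fin 3 → ℝ) : ℝ :=
  (2 * π) ^ (-(3 : ℝ) / 2) * Real.exp (-(ξ 0 ^ 2 + ξ 1 ^ 2 + ξ 2 ^ 2) / 2)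

noncomputable def gs (x : ℝ) : ℝ := Real.exp (-(1/2) * x ^ 2)

noncomputable def Hp (n : ℕ) : Polynomial ℝ := (Polynomial.hermite n).map (algebraMap ℤ ℝ)

lemma He_eq (n : ℕ) (x : ℝ) : He n x = (Hp n).eval x := by
  simp [He, Hp, Polynomial.aeval_def, Polynomial.eval_map]

lemma He_zero (x : ℝ) : He 0 x = 1 := by
  simp [He, Polynomial.hermite_zero]

lemma derivative_hermite_succ (n : ℕ) :
    Polynomial.derivative (Polynomial.hermite (n + 1)) =
      ((n : Polynomial ℤ) + 1) * Polynomial.hermite n := by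
  induction n with
  | zero => simp [Polynomial.hermite_one, Polynomial.hermite_zero]
  | succ n ih =>
    calc Polynomial.derivative (Polynomial.hermite (n + 2))
        = Polynomial.derivative (Polynomial.X * Polynomial.hermite (n + 1) -
            Polynomial.derivative (Polynomial.hermite (n + 1))) := by
          rw [Polynomial.hermite_succ]
      _ = Polynomial.hermite (n + 1) + Polynomial.X *
            Polynomial.derivative (Polynomial.hermite (n + 1)) -
            Polynomial.derivative (Polynomial.derivative (Polynomial.hermite (n + 1))) := by
          rw [Polynomial.derivative_sub, Polynomial.derivative_mul, Polynomial.derivative_X]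
          ring
      _ = Polynomial.hermite (n + 1) + Polynomial.X *
            (((n : Polynomial ℤ) + 1) * Polynomial.hermite n) -
            Polynomial.derivative (((n : Polynomial ℤ) + 1) * Polynomial.hermite n) := by
          rw [ih]
      _ = Polynomial.hermite (n + 1) + ((n : Polynomial ℤ) + 1) *
            (Polynomial.X * Polynomial.hermite n -
              Polynomial.derivative (Polynomial.hermite n)) := by
          rw [Polynomial.derivative_mul]
          simp
          ring
      _ = (((n+1 : ℕ) : Polynomial ℤ) + 1) * Polynomial.hermite (n + 1) := by
          rw [← Polynomial.hermite_succ]; push_cast; ring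

lemma aeval_derivative_hermite (n : ℕ) (x : ℝ) :
    (Polynomial.aeval x (Polynomial.derivative (Polynomial.hermite n)) : ℝ) =
      (n : ℝ) * He (n - 1) x := by
  cases n with
  | zero => simp [Polynomial.hermite_zero]
  | succ m =>
    rw [derivative_hermite_succ]
    simp only [He, map_mul, map_add, map_one, Polynomial.aeval_natCast, Nat.add_sub_cancel]
    push_cast
    ring

lemma He_succ (n : ℕ) (x : ℝ) :
    He (n + 1) x = x * He n x - (n : ℝ) * He (n - 1) x := by
  rw [He, Polynomial.hermite_succ, map_sub, aeval_derivative_hermite]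
  simp [He]

lemma He_hasDerivAt (n : ℕ) (x : ℝ) :
    HasDerivAt (fun y => He n y) ((n : ℝ) * He (n - 1) x) x := by
  have h := (Hp n).hasDerivAt x
  have h2 : (Polynomial.derivative (Hp n)).eval x = (n : ℝ) * He (n - 1) x := by
    rw [Hp, Polynomial.derivative_map, Polynomial.eval_map,
      ← Polynomial.aeval_def, aeval_derivative_hermite]
  simp only [← He_eq] at h
  rw [h2] at h
  exact h

lemma gs_hasDerivAt (x : ℝ) : HasDerivAt gs (gs x * (-x)) x := by
  have h1 : HasDerivAt (fun y : ℝ => -(1/2) * y ^ 2) (-x) x := by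
    have := (hasDerivAt_pow 2 x).const_mul (-(1/2) : ℝ)
    refine this.congr_deriv ?_
    push_cast; ring
  exact h1.exp

lemma integrable_gs : Integrable gs := by
  unfold gs
  exact integrable_exp_neg_mul_sq (by norm_num : (0:ℝ) < 1/2)

lemma integrable_pow_gs (n : ℕ) : Integrable fun x => x ^ n * gs x := by
  have h0 : Integrable fun x : ℝ => x ^ (n : ℝ) * Real.exp (-(1/2) * x ^ 2) :=
    integrable_rpow_mul_exp_neg_mul_sq (by norm_num)
      (lt_of_lt_of_le (by norm_num) (Nat.cast_nonneg n))
  simpa [gs, Real.rpow_natCast] using h0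

lemma integrable_poly_gs (P : Polynomial ℝ) : Integrable fun x => P.eval x * gs x := by
  induction P using Polynomial.induction_on' with
  | add p q hp hq => simp only [Polynomial.eval_add, add_mul]; exact hp.add hq
  | monomial n a =>
    simpa [Polynomial.eval_monomial, mul_assoc] using (integrable_pow_gs n).const_mul a

noncomputable def Iv (m n : ℕ) : ℝ := ∫ x : ℝ, He m x * He n x * gs x

lemma integrable_HeHe_gs (m n : ℕ) : Integrable fun x => He m x * He n x * gs x := by
  simpa [He_eq, mul_assoc] using integrable_poly_gs (Hp m * Hp n)

lemma Iv_symm (m n : ℕ) : Iv m n = Iv n m := by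
  unfold Iv; congr 1; funext x; ring

lemma Iv_step (m n : ℕ) : Iv m (n + 1) = (m : ℝ) * Iv (m - 1) n := by
  have hG : ∀ x : ℝ, HasDerivAt (fun y => He n y * gs y) (-(He (n + 1) x * gs x)) x := by
    intro x
    have h := (He_hasDerivAt n x).mul (gs_hasDerivAt x)
    refine h.congr_deriv ?_
    rw [He_succ]; ring
  have hF : ∀ x : ℝ, HasDerivAt (fun y => He m y * (He n y * gs y))
      ((m : ℝ) * He (m - 1) x * (He n x * gs x) - He m x * (He (n + 1) x * gs x)) x := by
    intro x
    have h := (He_hasDerivAt m x).mul (hG x)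
    refine h.congr_deriv ?_
    ring
  have Ia : Integrable fun x => (m : ℝ) * He (m - 1) x * (He n x * gs x) := by
    simpa [mul_assoc] using (integrable_HeHe_gs (m - 1) n).const_mul (m : ℝ)
  have Ib : Integrable fun x => He m x * (He (n + 1) x * gs x) := by
    simpa [mul_assoc] using integrable_HeHe_gs m (n + 1)
  have hFint : Integrable fun x => He m x * (He n x * gs x) := by
    simpa [mul_assoc] using integrable_HeHe_gs m n
  have h0 : (∫ x : ℝ, ((m : ℝ) * He (m - 1) x * (He n x * gs x) -
      He m x * (He (n + 1) x * gs x))) = 0 :=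
    integral_eq_zero_of_hasDerivAt_of_integrable hF (Ia.sub Ib) hFint
  rw [integral_sub Ia Ib] at h0
  have e1 : (∫ x : ℝ, (m : ℝ) * He (m - 1) x * (He n x * gs x)) = (m : ℝ) * Iv (m - 1) n := by
    rw [Iv, ← integral_const_mul]; congr 1; funext x; ring
  have e2 : (∫ x : ℝ, He m x * (He (n + 1) x * gs x)) = Iv m (n + 1) := by
    rw [Iv]; congr 1; funext x; ring
  rw [e1, e2] at h0
  linarith

lemma integral_gs : (∫ x : ℝ, gs x) = Real.sqrt (2 * π) := by
  have h := integral_gaussian (1/2)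
  rw [show π / (1/2) = 2 * π by ring] at h
  simpa [gs] using h

lemma Iv_zero_succ (n : ℕ) : Iv 0 (n + 1) = 0 := by
  have := Iv_step 0 n
  simpa using this

lemma Iv_val (m n : ℕ) : Iv m n = if m = n then (Nat.factorial m : ℝ) * Real.sqrt (2 * π) else 0 := by
  induction n generalizing m with
  | zero =>
    cases m with
    | zero =>
      simp only [if_pos rfl, Nat.factorial_zero, Nat.cast_one, one_mul]
      rw [Iv]
      simp only [He_zero, one_mul]
      exact integral_gs
    | succ k =>
      rw [Iv_symm, Iv_zero_succ]
      simp
  | succ n ih =>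
    rw [Iv_step]
    cases m with
    | zero => simp
    | succ k =>
      rw [Nat.succ_sub_one, ih k]
      by_cases h : k = n
      · subst h
        simp [Nat.factorial_succ]
        ring
      · simp [h, fun hc : k + 1 = n + 1 => h (by omega)]

noncomputable def kk (a b : ℕ) : ℝ :=
  if a = b + 1 then (Nat.factorial a : ℝ) else if b = a + 1 then (Nat.factorial b : ℝ) else 0

noncomputable def vf (a b : ℕ) : ℝ → ℝ := fun y => He a y * y * He b y * gs y

lemma integrable_vf (a b : ℕ) : Integrable (vf a b) := by
  have := integrable_poly_gs (Hp a * Polynomial.X * Hp b)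
  unfold vf
  simpa [He_eq, mul_assoc] using this

lemma integral_vf (a b : ℕ) : (∫ x : ℝ, vf a b x) = kk a b * Real.sqrt (2 * π) := by
  have hpt : ∀ y : ℝ, vf a b y =
      He a y * He (b + 1) y * gs y + (b : ℝ) * (He a y * He (b - 1) y * gs y) := by
    intro y
    rw [vf, He_succ]
    ring
  rw [show (∫ x : ℝ, vf a b x) = ∫ x : ℝ,
      (He a x * He (b + 1) x * gs x + (b : ℝ) * (He a x * He (b - 1) x * gs x)) from by
    congr 1; funext x; rw [hpt]]
  rw [integral_add (integrable_HeHe_gs a (b + 1))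
    (((integrable_HeHe_gs a (b - 1))).const_mul _), integral_const_mul]
  have h1 : (∫ x : ℝ, He a x * He (b + 1) x * gs x) = Iv a (b + 1) := rfl
  have h2 : (∫ x : ℝ, He a x * He (b - 1) x * gs x) = Iv a (b - 1) := rfl
  rw [h1, h2, Iv_val, Iv_val, kk]
  rcases eq_or_ne a (b + 1) with h | h
  · subst h
    rw [if_pos rfl, if_pos rfl, if_neg (by omega)]
    simp
  · rw [if_neg h, if_neg h]
    rcases eq_or_ne b (a + 1) with h2 | h2
    · subst h2
      simp only [Nat.add_sub_cancel, if_pos rfl, Nat.factorial_succ]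
      push_cast
      ring
    · rw [if_neg h2]
      cases b with
      | zero => simp
      | succ c =>
        rw [if_neg (by omega)]
        simp



noncomputable def c3 : ℝ := (2 * π) ^ (-(3 : ℝ) / 2)

lemma gauss3_eq (ξ : Fin 3 → ℝ) : gauss3 ξ = c3 * (gs (ξ 0) * gs (ξ 1) * gs (ξ 2)) := by
  simp only [gauss3, c3, gs, ← Real.exp_add]
  rw [Real.exp_eq_exp.mpr (by ring : -(ξ 0 ^ 2 + ξ 1 ^ 2 + ξ 2 ^ 2) / 2 =
    -(1/2) * ξ 0 ^ 2 + -(1/2) * ξ 1 ^ 2 + -(1/2) * ξ 2 ^ 2)]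

noncomputable def sep (c : ℝ) (u v w : ℝ → ℝ) : (Fin 3 → ℝ) → ℝ :=
  fun ξ => c * (u (ξ 0) * v (ξ 1) * w (ξ 2))

lemma sep_integrable {u v w : ℝ → ℝ} (c : ℝ) (hu : Integrable u) (hv : Integrable v)
    (hw : Integrable w) : Integrable (sep c u v w) := by
  have h : Integrable (fun x : Fin 3 → ℝ => ∏ i, (![u, v, w] i) (x i)) :=
    Integrable.fintype_prod (f := ![u, v, w]) (by
      intro i; fin_cases i <;> simpa)
  have h2 := h.const_mul c
  unfold sep
  simpa [Fin.prod_univ_three] using h2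

lemma sep_integral (c : ℝ) (u v w : ℝ → ℝ) :
    ∫ ξ : Fin 3 → ℝ, sep c u v w ξ =
      c * ((∫ x : ℝ, u x) * (∫ x : ℝ, v x) * (∫ x : ℝ, w x)) := by
  unfold sep
  rw [integral_const_mul]
  congr 1
  have h := MeasureTheory.integral_fintype_prod_eq_prod (ι := Fin 3) (fun i => ![u, v, w] i)
    (μ := fun _ => volume)
  simpa [Fin.prod_univ_three, ← MeasureTheory.volume_pi] using h

noncomputable def u2 : ℝ → ℝ := fun x => He 2 x * gs x
noncomputable def u22 : ℝ → ℝ := fun x => He 2 x * He 2 x * gs x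

lemma integrable_u2 : Integrable u2 := by
  unfold u2
  simpa [He_eq] using integrable_poly_gs (Hp 2)

lemma integrable_u22 : Integrable u22 := by
  unfold u22
  simpa [He_eq, mul_assoc] using integrable_poly_gs (Hp 2 * Hp 2)

lemma integral_u2 : (∫ x : ℝ, u2 x) = 0 := by
  have h : (∫ x : ℝ, u2 x) = Iv 2 0 := by
    unfold u2 Iv; congr 1; funext x; rw [He_zero]; ring
  rw [h, Iv_val]; norm_num

lemma integral_u22 : (∫ x : ℝ, u22 x) = 2 * Real.sqrt (2 * π) := by
  have h : (∫ x : ℝ, u22 x) = Iv 2 2 := rfl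
  rw [h, Iv_val]; norm_num [Nat.factorial]

lemma c3s3 : c3 * (Real.sqrt (2 * π) * Real.sqrt (2 * π) * Real.sqrt (2 * π)) = 1 := by
  have h2 : (0:ℝ) < 2 * π := by positivity
  rw [c3, Real.sqrt_eq_rpow, ← Real.rpow_add h2, ← Real.rpow_add h2, ← Real.rpow_add h2]
  norm_num

lemma big_decomp (α β α' β' : ℝ) (p q p' q' : ℕ) :
    (fun ξ : Fin 3 → ℝ =>
      (α * He p (ξ 1) + β * (He 2 (ξ 0) * He q (ξ 1) + He q (ξ 1) * He 2 (ξ 2))) * ξ 1 *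
      (α' * He p' (ξ 1) + β' * (He 2 (ξ 0) * He q' (ξ 1) + He q' (ξ 1) * He 2 (ξ 2))) * gauss3 ξ)
    = fun ξ =>
      sep (c3 * (α * α')) gs (vf p p') gs ξ +
      sep (c3 * (α * β')) u2 (vf p q') gs ξ +
      sep (c3 * (α * β')) gs (vf p q') u2 ξ +
      sep (c3 * (β * α')) u2 (vf q p') gs ξ +
      sep (c3 * (β * α')) gs (vf q p') u2 ξ +
      sep (c3 * (β * β')) u22 (vf q q') gs ξ +
      sep (c3 * (2 * (β * β'))) u2 (vf q q') u2 ξ +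
      sep (c3 * (β * β')) gs (vf q q') u22 ξ := by
  funext ξ
  rw [gauss3_eq]
  simp only [sep, vf, u2, u22]
  ring

lemma big_integrable (α β α' β' : ℝ) (p q p' q' : ℕ) :
    Integrable (fun ξ : Fin 3 → ℝ =>
      (α * He p (ξ 1) + β * (He 2 (ξ 0) * He q (ξ 1) + He q (ξ 1) * He 2 (ξ 2))) * ξ 1 *
      (α' * He p' (ξ 1) + β' * (He 2 (ξ 0) * He q' (ξ 1) + He q' (ξ 1) * He 2 (ξ 2))) *
      gauss3 ξ) := by
  rw [big_decomp]
  exact ((((((((sep_integrable _ integrable_gs (integrable_vf p p') integrable_gs).add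
    (sep_integrable _ integrable_u2 (integrable_vf p q') integrable_gs)).add
    (sep_integrable _ integrable_gs (integrable_vf p q') integrable_u2)).add
    (sep_integrable _ integrable_u2 (integrable_vf q p') integrable_gs)).add
    (sep_integrable _ integrable_gs (integrable_vf q p') integrable_u2)).add
    (sep_integrable _ integrable_u22 (integrable_vf q q') integrable_gs)).add
    (sep_integrable _ integrable_u2 (integrable_vf q q') integrable_u2)).add
    (sep_integrable _ integrable_gs (integrable_vf q q') integrable_u22))

lemma big_integral (α β α' β' : ℝ) (p q p' q' : ℕ) :
    (∫ ξ : Fin 3 → ℝ,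
      (α * He p (ξ 1) + β * (He 2 (ξ 0) * He q (ξ 1) + He q (ξ 1) * He 2 (ξ 2))) * ξ 1 *
      (α' * He p' (ξ 1) + β' * (He 2 (ξ 0) * He q' (ξ 1) + He q' (ξ 1) * He 2 (ξ 2))) *
      gauss3 ξ)
    = α * α' * kk p p' + 4 * (β * β') * kk q q' := by
  rw [big_decomp]
  have i1 := sep_integrable (c3 * (α * α')) integrable_gs (integrable_vf p p') integrable_gs
  have i2 := sep_integrable (c3 * (α * β')) integrable_u2 (integrable_vf p q') integrable_gs
  have i3 := sep_integrable (c3 * (α * β')) integrable_gs (integrable_vf p q') integrable_u2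
  have i4 := sep_integrable (c3 * (β * α')) integrable_u2 (integrable_vf q p') integrable_gs
  have i5 := sep_integrable (c3 * (β * α')) integrable_gs (integrable_vf q p') integrable_u2
  have i6 := sep_integrable (c3 * (β * β')) integrable_u22 (integrable_vf q q') integrable_gs
  have i7 := sep_integrable (c3 * (2 * (β * β'))) integrable_u2 (integrable_vf q q') integrable_u2
  have i8 := sep_integrable (c3 * (β * β')) integrable_gs (integrable_vf q q') integrable_u22
  have j2 : Integrable (fun ξ : Fin 3 → ℝ => sep (c3 * (α * α')) gs (vf p p') gs ξ +
      sep (c3 * (α * β')) u2 (vf p q') gs ξ) := i1.add i2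
  have j3 : Integrable (fun ξ : Fin 3 → ℝ => sep (c3 * (α * α')) gs (vf p p') gs ξ +
      sep (c3 * (α * β')) u2 (vf p q') gs ξ +
      sep (c3 * (α * β')) gs (vf p q') u2 ξ) := j2.add i3
  have j4 : Integrable (fun ξ : Fin 3 → ℝ => sep (c3 * (α * α')) gs (vf p p') gs ξ +
      sep (c3 * (α * β')) u2 (vf p q') gs ξ +
      sep (c3 * (α * β')) gs (vf p q') u2 ξ +
      sep (c3 * (β * α')) u2 (vf q p') gs ξ) := j3.add i4
  have j5 : Integrable (fun ξ : Fin 3 → ℝ => sep (c3 * (α * α')) gs (vf p p') gs ξ +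
      sep (c3 * (α * β')) u2 (vf p q') gs ξ +
      sep (c3 * (α * β')) gs (vf p q') u2 ξ +
      sep (c3 * (β * α')) u2 (vf q p') gs ξ +
      sep (c3 * (β * α')) gs (vf q p') u2 ξ) := j4.add i5
  have j6 : Integrable (fun ξ : Fin 3 → ℝ => sep (c3 * (α * α')) gs (vf p p') gs ξ +
      sep (c3 * (α * β')) u2 (vf p q') gs ξ +
      sep (c3 * (α * β')) gs (vf p q') u2 ξ +
      sep (c3 * (β * α')) u2 (vf q p') gs ξ +
      sep (c3 * (β * α')) gs (vf q p') u2 ξ +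
      sep (c3 * (β * β')) u22 (vf q q') gs ξ) := j5.add i6
  have j7 : Integrable (fun ξ : Fin 3 → ℝ => sep (c3 * (α * α')) gs (vf p p') gs ξ +
      sep (c3 * (α * β')) u2 (vf p q') gs ξ +
      sep (c3 * (α * β')) gs (vf p q') u2 ξ +
      sep (c3 * (β * α')) u2 (vf q p') gs ξ +
      sep (c3 * (β * α')) gs (vf q p') u2 ξ +
      sep (c3 * (β * β')) u22 (vf q q') gs ξ +
      sep (c3 * (2 * (β * β'))) u2 (vf q q') u2 ξ) := j6.add i7
  rw [integral_add j7 i8, integral_add j6 i7, integral_add j5 i6, integral_add j4 i5,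
    integral_add j3 i4, integral_add j2 i3, integral_add i1 i2]
  simp only [sep_integral, integral_gs, integral_u2, integral_u22, integral_vf]
  linear_combination (α * α' * kk p p' + 4 * (β * β') * kk q q') * c3s3

noncomputable def al (i : ℕ) : ℝ := if i = 1 then 1 else if i % 2 = 0 then 1 else 0
def pp (i : ℕ) : ℕ := if i = 1 then 2 else i + 2
noncomputable def be (i : ℕ) : ℝ := if i = 1 then -(1/2) else if i % 2 = 0 then 0 else 1/2
def qq (i : ℕ) : ℕ := if i = 1 then 0 else i - 1

noncomputable def al' (j : ℕ) : ℝ := if j = 1 then 1 else if j % 2 = 0 then 1 else 0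
def pp' (j : ℕ) : ℕ := if j = 1 then 3 else j + 3
noncomputable def be' (j : ℕ) : ℝ := if j = 1 then -(3/2) else if j % 2 = 0 then 0 else 1/2
def qq' (j : ℕ) : ℕ := if j = 1 then 1 else j

lemma phi_rep (i : ℕ) (ξ : Fin 3 → ℝ) : phi i ξ =
    al i * He (pp i) (ξ 1) +
    be i * (He 2 (ξ 0) * He (qq i) (ξ 1) + He (qq i) (ξ 1) * He 2 (ξ 2)) := by
  unfold phi al pp be qq
  by_cases h1 : i = 1
  · simp only [if_pos h1]
    rw [He_zero]
    ring
  · simp only [if_neg h1]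
    by_cases h2 : i % 2 = 0 <;> simp only [if_pos, if_neg, h2, if_true, if_false] <;> ring

lemma psi_rep (j : ℕ) (ξ : Fin 3 → ℝ) : psi j ξ =
    al' j * He (pp' j) (ξ 1) +
    be' j * (He 2 (ξ 0) * He (qq' j) (ξ 1) + He (qq' j) (ξ 1) * He 2 (ξ 2)) := by
  unfold psi al' pp' be' qq'
  by_cases h1 : j = 1
  · simp only [if_pos h1]
    ring
  · simp only [if_neg h1]
    by_cases h2 : j % 2 = 0 <;> simp only [if_pos, if_neg, h2, if_true, if_false] <;> ring

noncomputable def Mv (i j : ℕ) : ℝ :=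
  al i * al' j * kk (pp i) (pp' j) + 4 * (be i * be' j) * kk (qq i) (qq' j)

lemma integral_phi_psi (i j : ℕ) :
    (∫ ξ : Fin 3 → ℝ, phi i ξ * ξ 1 * psi j ξ * gauss3 ξ) = Mv i j := by
  simp_rw [phi_rep, psi_rep]
  exact big_integral (al i) (be i) (al' j) (be' j) (pp i) (qq i) (pp' j) (qq' j)

lemma integrable_phi_psi (i j : ℕ) :
    Integrable (fun ξ : Fin 3 → ℝ => phi i ξ * ξ 1 * psi j ξ * gauss3 ξ) := by
  simp_rw [phi_rep, psi_rep]
  exact big_integrable (al i) (be i) (al' j) (be' j) (pp i) (qq i) (pp' j) (qq' j)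

lemma kk_eq_zero {a b : ℕ} (h1 : a ≠ b + 1) (h2 : b ≠ a + 1) : kk a b = 0 := by
  rw [kk, if_neg h1, if_neg h2]

lemma Mv_upper (i j : ℕ) (hi : 1 ≤ i) (hij : i < j) : Mv i j = 0 := by
  have hj1 : j ≠ 1 := by omega
  unfold Mv
  by_cases hi1 : i = 1
  · subst hi1
    by_cases hj2 : j % 2 = 0
    · simp [al, al', pp, pp', be, be', qq, qq', hj1, hj2]
      rw [kk_eq_zero (by omega) (by omega)]
    · simp [al, al', pp, pp', be, be', qq, qq', hj1, hj2]
      rw [kk_eq_zero (a := 0) (b := j) (by omega) (by omega)]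
  · by_cases hie : i % 2 = 0
    · by_cases hje : j % 2 = 0
      · simp [al, al', pp, pp', be, be', qq, qq', hi1, hj1, hie, hje]
        rw [kk_eq_zero (by omega) (by omega)]
      · simp [al, al', pp, pp', be, be', qq, qq', hi1, hj1, hie, hje]
    · by_cases hje : j % 2 = 0
      · simp [al, al', pp, pp', be, be', qq, qq', hi1, hj1, hie, hje]
      · simp [al, al', pp, pp', be, be', qq, qq', hi1, hj1, hie, hje]
        rw [kk_eq_zero (a := i - 1) (b := j) (by omega) (by omega)]

lemma Mv_diag (i : ℕ) (hi : 1 ≤ i) : Mv i i ≠ 0 := by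
  unfold Mv
  by_cases hi1 : i = 1
  · subst hi1
    simp only [al, al', pp, pp', be, be', qq, qq', if_pos rfl, reduceIte]
    rw [show kk 2 3 = 6 by rw [kk, if_neg (by omega), if_pos rfl]; norm_num [Nat.factorial],
      show kk 0 1 = 1 by rw [kk, if_neg (by omega), if_pos rfl]; norm_num [Nat.factorial]]
    norm_num
  · by_cases hie : i % 2 = 0
    · simp [al, al', pp, pp', be, be', qq, qq', hi1, hie]
      rw [show kk (i + 2) (i + 3) = ((i + 3).factorial : ℝ) by
        rw [kk, if_neg (by omega), if_pos (by omega)]]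
      have hpos : (0:ℝ) < ((i + 3).factorial : ℝ) := by
        exact_mod_cast Nat.factorial_pos (i + 3)
      intro hc
      nlinarith
    · simp [al, al', pp, pp', be, be', qq, qq', hi1, hie]
      rw [show kk (i - 1) i = (i.factorial : ℝ) by
        rw [kk, if_neg (by omega), if_pos (by omega)]]
      have hpos : (0:ℝ) < (i.factorial : ℝ) := by exact_mod_cast Nat.factorial_pos i
      intro hc
      nlinarith

theorem M0_full_column_rank (mo : ℕ) (hmo : 1 ≤ mo) (r : Fin mo → ℝ)
    (h : ∀ i : Fin mo,
      ∫ ξ : Fin 3 → ℝ,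
        phi (i.val + 1) ξ * ξ 1 * (∑ j : Fin mo, r j * psi (j.val + 1) ξ) * gauss3 ξ = 0) :
    r = 0 := by
  have h' : ∀ i : Fin mo, ∑ j : Fin mo, r j * Mv (i.val + 1) (j.val + 1) = 0 := by
    intro i
    have hh := h i
    rw [show (∫ ξ : Fin 3 → ℝ,
        phi (i.val + 1) ξ * ξ 1 * (∑ j : Fin mo, r j * psi (j.val + 1) ξ) * gauss3 ξ)
      = ∫ ξ : Fin 3 → ℝ, ∑ j : Fin mo,
        r j * (phi (i.val + 1) ξ * ξ 1 * psi (j.val + 1) ξ * gauss3 ξ) from by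
        congr 1; funext ξ
        rw [Finset.mul_sum, Finset.sum_mul]
        exact Finset.sum_congr rfl fun j _ => by ring] at hh
    rw [integral_finset_sum Finset.univ
      (fun j _ => (integrable_phi_psi (i.val + 1) (j.val + 1)).const_mul (r j))] at hh
    calc ∑ j : Fin mo, r j * Mv (i.val + 1) (j.val + 1)
        = ∑ j : Fin mo, ∫ ξ : Fin 3 → ℝ,
            r j * (phi (i.val + 1) ξ * ξ 1 * psi (j.val + 1) ξ * gauss3 ξ) := by
          refine Finset.sum_congr rfl fun j _ => ?_
          rw [integral_const_mul, integral_phi_psi]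
      _ = 0 := hh
  have key : ∀ n : ℕ, ∀ j : Fin mo, (j : ℕ) = n → r j = 0 := by
    intro n
    induction n using Nat.strong_induction_on with
    | _ n ih =>
      intro j hj
      have hs := h' j
      have hsingle : ∑ j' : Fin mo, r j' * Mv (j.val + 1) (j'.val + 1)
          = r j * Mv (j.val + 1) (j.val + 1) := by
        refine Finset.sum_eq_single_of_mem j (Finset.mem_univ j) ?_
        intro j' _ hne
        rcases lt_or_gt_of_ne (fun hc : (j' : ℕ) = (j : ℕ) => hne (Fin.ext hc)) with hlt | hgt
        · rw [ih ((j' : ℕ)) (by omega) j' rfl, zero_mul]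
        · rw [Mv_upper _ _ (by omega) (by omega), mul_zero]
      rw [hsingle] at hs
      rcases mul_eq_zero.mp hs with h0 | h0
      · exact h0
      · exact absurd h0 (Mv_diag _ (by omega))
  funext j
  exact key (j : ℕ) j rfl
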